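/- Let D ⊆ ℂ be a nonempty open connected set and f : D → ℂ a holomorphic function. If f is not identically zero and there exists a nonzero polynomial P ∈ ℂ[X,Y] such that P(z, f(z)) = 0 for all z ∈ D, then the zero set {z ∈ D : f(z) = 0} is finite. -/
import Mathlib

noncomputable def psi : Polynomial (Polynomial ℂ) →+* MvPolynomial (Fin 2) ℂ :=
  Polynomial.eval₂RingHom
    (Polynomial.eval₂RingHom (MvPolynomial.C) (MvPolynomial.X 0)) (MvPolynomial.X 1)

theorem psi_eval (v : Fin 2 → ℂ) (Q : Polynomial (Polynomial ℂ)) :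
    MvPolynomial.eval v (psi Q) = Polynomial.eval₂ (Polynomial.evalRingHom (v 0)) (v 1) Q := by
  unfold psi
  rw [Polynomial.coe_eval₂RingHom, Polynomial.hom_eval₂]
  simp only [MvPolynomial.eval_X]
  congr 1
  ext c
  · simp
  · simp

theorem psi_phi (P : MvPolynomial (Fin 2) ℂ) :
    psi (MvPolynomial.aeval ![Polynomial.C Polynomial.X, Polynomial.X] P) = P := by
  have : (psi.comp ((MvPolynomial.aeval
      ![Polynomial.C Polynomial.X, Polynomial.X] :
        MvPolynomial (Fin 2) ℂ →ₐ[ℂ] Polynomial (Polynomial ℂ)) : MvPolynomial (Fin 2) ℂ →+* _))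
      = RingHom.id _ := by
    apply MvPolynomial.ringHom_ext
    · intro c
      simp [psi]
    · intro i
      fin_cases i <;> simp [psi]
  exact congrFun (congrArg DFunLike.coe this) P

/-- **Finiteness of zeros of complex Nash functions.** If `D ⊆ ℂ` is a nonempty open
connected set, `f` is holomorphic on `D`, not identically zero on `D`, and there is a
nonzero polynomial `P ∈ ℂ[X,Y]` with `P (z, f z) = 0` on `D`, then the zero set of `f`
in `D` is finite. -/
theorem stmt_1 (D : Set ℂ) (hne : D.Nonempty) (hopen : IsOpen D) (hconn : IsConnected D)
    (f : ℂ → ℂ) (hf : DifferentiableOn ℂ f D)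
    (hnz : ¬ ∀ z ∈ D, f z = 0)
    (P : MvPolynomial (Fin 2) ℂ) (hP : P ≠ 0)
    (hPf : ∀ z ∈ D, MvPolynomial.eval ![z, f z] P = 0) :
    {z ∈ D | f z = 0}.Finite := by
  classical
  have hA : AnalyticOnNhd ℂ f D := hf.analyticOnNhd hopen
  set Q : Polynomial (Polynomial ℂ) :=
    MvPolynomial.aeval ![Polynomial.C Polynomial.X, Polynomial.X] P with hQdef
  have hQ : Q ≠ 0 := by
    intro h
    apply hP
    rw [← psi_phi P, ← hQdef, h, map_zero]
  obtain ⟨R, hQR, hndvd⟩ := Q.exists_eq_pow_rootMultiplicity_mul_and_not_dvd hQ 0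
  set k := Polynomial.rootMultiplicity 0 Q with hk
  rw [map_zero, sub_zero] at hQR hndvd
  have hr : R.coeff 0 ≠ 0 := by
    rwa [Polynomial.X_dvd_iff] at hndvd
  -- decomposition of P
  have hPfac : P = (MvPolynomial.X 1) ^ k * psi R := by
    have := congrArg psi hQR
    rw [psi_phi P] at this
    rw [this, map_mul, map_pow]
    congr 2
    simp [psi]
  -- pointwise factorization
  have hfac : ∀ z ∈ D, (f z) ^ k * MvPolynomial.eval ![z, f z] (psi R) = 0 := by
    intro z hz
    have := hPf z hz
    rw [hPfac, map_mul, map_pow, MvPolynomial.eval_X] at this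
    simpa using this
  -- the continuous function G
  set G : ℂ → ℂ := fun z =>
    ∑ i ∈ Finset.range (R.natDegree + 1), (R.coeff i).eval z * (f z) ^ i with hGdef
  have hGeq : ∀ z, MvPolynomial.eval ![z, f z] (psi R) = G z := by
    intro z
    rw [psi_eval ![z, f z] R]
    simp only [Matrix.cons_val_zero, Matrix.cons_val_one, Matrix.head_cons]
    rw [Polynomial.eval₂_eq_sum_range]
    rfl
  -- every zero of f in D is a root of R.coeff 0
  have key : ∀ z₀ ∈ D, f z₀ = 0 → (R.coeff 0).IsRoot z₀ := by
    intro z₀ hz₀ hfz₀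
    rcases (hA z₀ hz₀).eventually_eq_zero_or_eventually_ne_zero with h | h
    · exact absurd (fun z hz =>
        hA.eqOn_zero_of_preconnected_of_eventuallyEq_zero hconn.isPreconnected hz₀ h hz) hnz
    · have hGcont : ContinuousAt G z₀ := by
        apply tendsto_finset_sum
        intro i _
        exact ((Polynomial.continuous (R.coeff i)).continuousAt).mul
          (((hf.continuousOn z₀ hz₀).continuousAt (hopen.mem_nhds hz₀)).pow i)
      have hD : ∀ᶠ z in nhdsWithin z₀ {z₀}ᶜ, z ∈ D :=
        Filter.Eventually.filter_mono nhdsWithin_le_nhds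
          (hopen.eventually_mem hz₀)
      have hG0 : ∀ᶠ z in nhdsWithin z₀ {z₀}ᶜ, G z = 0 := by
        filter_upwards [h, hD] with z hfz hzD
        have := hfac z hzD
        rw [hGeq] at this
        rcases mul_eq_zero.mp this with h' | h'
        · exact absurd (pow_eq_zero_iff' .. |>.mp h').1 hfz
        · exact h'
      have h1 : Filter.Tendsto G (nhdsWithin z₀ {z₀}ᶜ) (nhds (G z₀)) :=
        hGcont.tendsto.mono_left nhdsWithin_le_nhds
      have h2 : Filter.Tendsto G (nhdsWithin z₀ {z₀}ᶜ) (nhds 0) :=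
        Filter.Tendsto.congr' (Filter.EventuallyEq.symm hG0) tendsto_const_nhds
      have hGz₀ : G z₀ = 0 := tendsto_nhds_unique h1 h2
      have : G z₀ = (R.coeff 0).eval z₀ := by
        rw [hGdef]
        simp only [hfz₀]
        rw [Finset.sum_eq_single_of_mem 0 (Finset.mem_range.mpr (Nat.succ_pos _))]
        · simp
        · intro b _ hb
          simp [zero_pow hb]
      rwa [this] at hGz₀
  exact (Polynomial.finite_setOf_isRoot hr).subset fun z hz => key z hz.1 hz.2
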